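/- arXiv:2309.00557 — 6 statements merged into one kernel-verified Lean document; each statement's English description precedes it below -/
import Mathlib

section
/- For any bandit policy π and any ε ≥ 0, the Table mechanism M^π satisfies ε-DP (i.e. (ε,0)-DP) if and only if the View mechanism V^π satisfies ε-DP. -/
/-!
Statement 0: For any bandit policy π and any ε ≥ 0, the Table mechanism M^π
satisfies ε-DP (i.e. (ε,0)-DP) if and only if the View mechanism V^π satisfies ε-DP.
-/

open scoped BigOperators

/-- A bandit policy for `K` arms: at step `t` (0-indexed), given the history of
(action, reward) pairs, it returns a probability vector over the `K` arms. -/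
abbrev BPolicy (K : ℕ) := ℕ → List (Fin K × ℝ) → Fin K → ℝ

/-- The condition that a policy is an actual sequence of probability kernels. -/
def IsBPolicy {K : ℕ} (π : BPolicy K) : Prop :=
  ∀ t h, (∀ a, 0 ≤ π t h a) ∧ ∑ a, π t h a = 1

/-- Auxiliary coercion of an index `s < t` into `Fin T` (for `t : Fin T`). -/
def Fin.embed {T : ℕ} (t : Fin T) (s : Fin t.val) : Fin T := ⟨s.val, s.isLt.trans t.isLt⟩

/-- The history `(a_1, r_1, …, a_{t-1}, r_{t-1})` built from a sequence of actions `a`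
and a sequence of rewards `r`, as seen just before step `t`. -/
def histOf {K T : ℕ} (a : Fin T → Fin K) (r : Fin T → ℝ) (t : Fin T) : List (Fin K × ℝ) :=
  List.ofFn fun s : Fin t.val => (a (t.embed s), r (t.embed s))

/-- The View mechanism `V^π`: probability that the policy `π`, fed the fixed list of
rewards `r`, produces the sequence of actions `a`:
`V^π_r(a_1,…,a_T) = ∏_t π_t(a_t | a_1, r_1, …, a_{t-1}, r_{t-1})`. -/
noncomputable def viewProb {K T : ℕ} (π : BPolicy K) (r : Fin T → ℝ) (a : Fin T → Fin K) : ℝ :=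
  ∏ t : Fin T, π t.val (histOf a r t) (a t)

/-- The Table mechanism `M^π`: probability that the policy `π`, interacting with the
table of (potential) rewards `d`, produces the sequence of actions `a`:
`M^π_d(a_1,…,a_T) = ∏_t π_t(a_t | a_1, x_{1,a_1}, …, a_{t-1}, x_{t-1,a_{t-1}})`. -/
noncomputable def tableProb {K T : ℕ} (π : BPolicy K) (d : Fin T → Fin K → ℝ)
    (a : Fin T → Fin K) : ℝ :=
  viewProb π (fun s => d s (a s)) a

/-- Two inputs (tables or lists, viewed as functions) are neighbouring when they differ
in exactly one coordinate. -/
def Adjacent {T : ℕ} {α : Type*} (x y : Fin T → α) : Prop :=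
  ∃ j, x j ≠ y j ∧ ∀ i, i ≠ j → x i = y i

/-- `(ε,δ)`-differential privacy for a mechanism `M` with finite output space, with
respect to a neighbouring relation `Neigh`: for all neighbouring inputs and all events
`E`, `M_d(E) ≤ e^ε · M_{d'}(E) + δ`. -/
def IsDP {I Ω : Type*} [Fintype Ω] (M : I → Ω → ℝ) (Neigh : I → I → Prop)
    (ε δ : ℝ) : Prop :=
  ∀ d d', Neigh d d' → ∀ E : Finset Ω,
    ∑ a ∈ E, M d a ≤ Real.exp ε * ∑ a ∈ E, M d' a + δ

lemma viewProb_nonneg {K T : ℕ} {π : BPolicy K} (hπ : IsBPolicy π)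
    (r : Fin T → ℝ) (a : Fin T → Fin K) : 0 ≤ viewProb π r a :=
  Finset.prod_nonneg fun t _ => (hπ t.val (histOf a r t)).1 (a t)

theorem table_dp_iff_view_dp {K T : ℕ} (π : BPolicy K) (hπ : IsBPolicy π)
    (ε : ℝ) (hε : 0 ≤ ε) :
    IsDP (fun d : Fin T → Fin K → ℝ => tableProb π d) Adjacent ε 0 ↔
      IsDP (fun r : Fin T → ℝ => viewProb π r) Adjacent ε 0 := by
  constructor
  · rintro hT r r' ⟨j, hj, hfix⟩ E
    by_cases hK : Nonempty (Fin K)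
    · have := hT (fun s _ => r s) (fun s _ => r' s)
        ⟨j, fun h => hj (congrFun h (Classical.arbitrary _)),
          fun i hi => funext fun _ => hfix i hi⟩ E
      simpa [tableProb] using this
    · haveI : IsEmpty (Fin T → Fin K) := ⟨fun f => hK ⟨f j⟩⟩
      simp [Finset.eq_empty_of_isEmpty E]
  · rintro hV d d' ⟨j, hj, hfix⟩ E
    have key : ∀ a : Fin T → Fin K,
        tableProb π d a ≤ Real.exp ε * tableProb π d' a := by
      intro a
      by_cases h : d j (a j) = d' j (a j)
      · have hr : (fun s => d s (a s)) = fun s => d' s (a s) := by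
          funext s
          by_cases hs : s = j
          · subst hs; exact h
          · rw [hfix s hs]
        have heq : tableProb π d a = tableProb π d' a := by
          unfold tableProb; rw [hr]
        rw [heq]
        nlinarith [show (0:ℝ) ≤ tableProb π d' a from viewProb_nonneg hπ _ a, Real.one_le_exp hε]
      · have := hV (fun s => d s (a s)) (fun s => d' s (a s))
          ⟨j, h, fun i hi => show d i (a i) = d' i (a i) by rw [hfix i hi]⟩ {a}
        simpa [tableProb] using this
    calc ∑ a ∈ E, tableProb π d a ≤ ∑ a ∈ E, Real.exp ε * tableProb π d' a :=
          Finset.sum_le_sum fun a _ => key a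
      _ = Real.exp ε * ∑ a ∈ E, tableProb π d' a + 0 := by rw [Finset.mul_sum]; ring
end

section
/- For any bandit policy π, if the Table mechanism M^π satisfies (ε,δ)-DP, then the View mechanism V^π satisfies (ε,δ)-DP. -/
/-!
Statement 0: For any bandit policy π and any ε ≥ 0, the Table mechanism M^π
satisfies ε-DP (i.e. (ε,0)-DP) if and only if the View mechanism V^π satisfies ε-DP.
-/

open scoped BigOperators

/-!
Statement 1: For any bandit policy π, if the Table mechanism M^π satisfies (ε,δ)-DP,
then the View mechanism V^π satisfies (ε,δ)-DP.
-/

theorem view_dp_of_table_dp {K T : ℕ} (π : BPolicy K) (hπ : IsBPolicy π) (ε δ : ℝ)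
    (htable : IsDP (fun d : Fin T → Fin K → ℝ => tableProb π d) Adjacent ε δ) :
    IsDP (fun r : Fin T → ℝ => viewProb π r) Adjacent ε δ := by
  rintro r r' ⟨j, hj, hij⟩ E
  rcases Nat.eq_zero_or_pos K with hK | hK
  · exfalso
    have h1 := (hπ 0 []).2
    subst hK
    simp at h1
  · have hadj : Adjacent (fun s (_ : Fin K) => r s) (fun s (_ : Fin K) => r' s) :=
      ⟨j, fun h => hj (congrFun h ⟨0, hK⟩), fun i hi => funext fun _ => hij i hi⟩
    exact htable _ _ hadj E
end

section
/- For any bandit policy π, if the Table mechanism M^π satisfies ρ-zCDP, then the View mechanism V^π satisfies ρ-zCDP. -/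
/-!
Statement 0: For any bandit policy π and any ε ≥ 0, the Table mechanism M^π
satisfies ε-DP (i.e. (ε,0)-DP) if and only if the View mechanism V^π satisfies ε-DP.
-/

open scoped BigOperators

/-- The Rényi divergence of order `α` between two distributions `p` and `q`
on a finite space: `D_α(p‖q) = (α-1)⁻¹ · log (∑ x, p(x)^α · q(x)^{1-α})`. -/
noncomputable def renyiDiv {Ω : Type*} [Fintype Ω] (α : ℝ) (p q : Ω → ℝ) : ℝ :=
  (α - 1)⁻¹ * Real.log (∑ x, p x ^ α * q x ^ (1 - α))

/-- `ρ`-zero-concentrated differential privacy for a mechanism `M` with finite output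
space, with respect to a neighbouring relation `Neigh`: for all `α > 1` and all
neighbouring inputs, `D_α(M_d ‖ M_{d'}) ≤ ρα`. -/
def IsZCDP {I Ω : Type*} [Fintype Ω] (M : I → Ω → ℝ) (Neigh : I → I → Prop)
    (ρ : ℝ) : Prop :=
  ∀ α : ℝ, 1 < α → ∀ d d', Neigh d d' → renyiDiv α (M d) (M d') ≤ ρ * α

/-!
Statement 2: For any bandit policy π, if the Table mechanism M^π satisfies ρ-zCDP,
then the View mechanism V^π satisfies ρ-zCDP.
-/

theorem view_zcdp_of_table_zcdp {K T : ℕ} (π : BPolicy K) (hπ : IsBPolicy π) (ρ : ℝ)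
    (htable : IsZCDP (fun d : Fin T → Fin K → ℝ => tableProb π d) Adjacent ρ) :
    IsZCDP (fun r : Fin T → ℝ => viewProb π r) Adjacent ρ := by
  rcases Nat.eq_zero_or_pos K with hK | hK
  · exfalso
    have h := (hπ 0 []).2
    subst hK
    simp at h
  · intro α hα r r' ⟨j, hj, hij⟩
    have hadj : Adjacent (fun s (_ : Fin K) => r s) (fun s (_ : Fin K) => r' s) := by
      refine ⟨j, ?_, fun i hi => by funext a; exact hij i hi⟩
      intro h
      exact hj (congrFun h ⟨0, hK⟩)
    have := htable α hα _ _ hadj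
    exact this
end

section
/- There exist ε ≥ 0, δ ∈ (0,1) and a bandit policy π (one can take horizon T = 3, K = 2 arms, ε = 0.95, δ = 0.17) such that the View mechanism V^π satisfies (ε,δ)-DP but the Table mechanism M^π does not satisfy (ε,δ)-DP; hence the class of policies satisfying (ε,δ)-Table DP is strictly contained in the class of policies satisfying (ε,δ)-View DP. -/
/-!
Statement 0: For any bandit policy π and any ε ≥ 0, the Table mechanism M^π
satisfies ε-DP (i.e. (ε,0)-DP) if and only if the View mechanism V^π satisfies ε-DP.
-/

open scoped BigOperators

/-!
Statement 4: There exist ε ≥ 0, δ ∈ (0,1) and a bandit policy π (with horizon T = 3 and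
K = 2 arms) such that the View mechanism V^π satisfies (ε,δ)-DP while the Table
mechanism M^π does not; hence the class of (ε,δ)-Table DP policies is strictly
contained in the class of (ε,δ)-View DP policies.
-/

open scoped BigOperators

noncomputable section CounterexampleAux

/-- piecewise level of arm 0. -/
noncomputable def cexφ0 (r : ℝ) : ℝ := if r < 0 then 0 else if r < 1 then 1 else 1/2
/-- piecewise level of arm 1. -/
noncomputable def cexφ1 (r : ℝ) : ℝ := if r < 1 then 1/2 else if r < 2 then 0 else 1

noncomputable def cexp0 (r : ℝ) : ℝ := 7/20 + 3/10 * cexφ0 r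
noncomputable def cexp1 (r : ℝ) : ℝ := 7/20 + 3/10 * cexφ1 r

noncomputable def cexpk (k : Fin 2) (r : ℝ) : ℝ := if k = 0 then cexp0 r else cexp1 r

noncomputable def cexf (k : Fin 2) (r : ℝ) (a : Fin 2) : ℝ :=
  if a = 1 then cexpk k r else 1 - cexpk k r

noncomputable def cexpol : BPolicy 2 := fun t h a =>
  if t = 1 then
    (match h.head? with
      | some (a0, r0) => cexf a0 r0 a
      | none => (1/2 : ℝ))
  else (1/2 : ℝ)

lemma cexφ_cases (r : ℝ) :
    (cexφ0 r = 0 ∧ cexφ1 r = 1/2) ∨ (cexφ0 r = 1 ∧ cexφ1 r = 1/2) ∨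
    (cexφ0 r = 1/2 ∧ cexφ1 r = 0) ∨ (cexφ0 r = 1/2 ∧ cexφ1 r = 1) := by
  unfold cexφ0 cexφ1
  split_ifs <;> norm_num <;> linarith

end CounterexampleAux
section CounterexampleAux

lemma cexpk_zero (r : ℝ) : cexpk 0 r = cexp0 r := rfl
lemma cexpk_one (r : ℝ) : cexpk 1 r = cexp1 r := rfl
lemma cexf_zero (k : Fin 2) (r : ℝ) : cexf k r 0 = 1 - cexpk k r := rfl
lemma cexf_one (k : Fin 2) (r : ℝ) : cexf k r 1 = cexpk k r := rfl

lemma cexpk_bounds (k : Fin 2) (r : ℝ) : 7/20 ≤ cexpk k r ∧ cexpk k r ≤ 13/20 := by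
  unfold cexpk cexp0 cexp1
  rcases cexφ_cases r with ⟨e0, e1⟩ | ⟨e0, e1⟩ | ⟨e0, e1⟩ | ⟨e0, e1⟩ <;>
    split_ifs <;> simp only [e0, e1] <;> norm_num

lemma cexpol_isBPolicy : IsBPolicy cexpol := by
  intro t h
  constructor
  · intro a
    unfold cexpol
    split_ifs with ht
    · rcases h.head? with _ | ⟨a0, r0⟩
      · norm_num
      · have hb := cexpk_bounds a0 r0
        simp only [cexf]
        split_ifs <;> linarith [hb.1, hb.2]
    · norm_num
  · unfold cexpol
    split_ifs with ht
    · rcases h.head? with _ | ⟨a0, r0⟩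
      · norm_num [Fin.sum_univ_two]
      · simp only [Fin.sum_univ_two, cexf_zero, cexf_one]; ring
    · norm_num [Fin.sum_univ_two]

lemma view_eval (r : Fin 3 → ℝ) (a : Fin 3 → Fin 2) :
    viewProb cexpol r a = 1/4 * cexf (a 0) (r 0) (a 1) := by
  unfold viewProb
  rw [Fin.prod_univ_three]
  have h0 : cexpol (0 : Fin 3).val (histOf a r 0) (a 0) = 1/2 := rfl
  have h2 : cexpol (2 : Fin 3).val (histOf a r 2) (a 2) = 1/2 := rfl
  have h1 : cexpol (1 : Fin 3).val (histOf a r 1) (a 1) = cexf (a 0) (r 0) (a 1) := rfl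
  rw [h0, h1, h2]; ring

lemma sum_pi3 (g : (Fin 3 → Fin 2) → ℝ) :
    ∑ a : Fin 3 → Fin 2, g a = ∑ x : Fin 2, ∑ y : Fin 2, ∑ z : Fin 2, g ![x, y, z] := by
  rw [← (Fin.consEquiv fun _ : Fin 3 => Fin 2).sum_comp g, Fintype.sum_prod_type]
  refine Finset.sum_congr rfl fun x _ => ?_
  rw [← (Fin.consEquiv fun _ : Fin 2 => Fin 2).sum_comp, Fintype.sum_prod_type]
  refine Finset.sum_congr rfl fun y _ => ?_
  rw [← (Fin.consEquiv fun _ : Fin 1 => Fin 2).sum_comp, Fintype.sum_prod_type]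
  refine Finset.sum_congr rfl fun z _ => ?_
  rw [Fintype.sum_subsingleton _ (fun i : Fin 0 => i.elim0)]
  simp [Fin.consEquiv]
  congr 1

lemma key_bound (v v' : ℝ) :
    ∑ a : Fin 3 → Fin 2, max (1/4 * cexf (a 0) v (a 1) - 1/4 * cexf (a 0) v' (a 1)) 0
      ≤ 17/100 := by
  rw [sum_pi3]
  simp only [Fin.sum_univ_two, Matrix.cons_val_zero, Matrix.cons_val_one, Matrix.head_cons,
    cexf_zero, cexf_one, cexpk_zero, cexpk_one, cexp0, cexp1]
  rcases cexφ_cases v with ⟨e0, e1⟩ | ⟨e0, e1⟩ | ⟨e0, e1⟩ | ⟨e0, e1⟩ <;>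
  rcases cexφ_cases v' with ⟨f0, f1⟩ | ⟨f0, f1⟩ | ⟨f0, f1⟩ | ⟨f0, f1⟩ <;>
    rw [e0, e1, f0, f1] <;> norm_num [max_def]

lemma view_dp : IsDP (fun r : Fin 3 → ℝ => viewProb cexpol r) Adjacent 0 (17/100) := by
  intro r r' _ E
  rw [Real.exp_zero, one_mul]
  have h1 : ∑ a ∈ E, viewProb cexpol r a - ∑ a ∈ E, viewProb cexpol r' a ≤
      ∑ a : Fin 3 → Fin 2, max (viewProb cexpol r a - viewProb cexpol r' a) 0 := by
    rw [← Finset.sum_sub_distrib]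
    calc ∑ a ∈ E, (viewProb cexpol r a - viewProb cexpol r' a)
        ≤ ∑ a ∈ E, max (viewProb cexpol r a - viewProb cexpol r' a) 0 :=
          Finset.sum_le_sum fun a _ => le_max_left _ _
      _ ≤ _ := Finset.sum_le_sum_of_subset_of_nonneg (Finset.subset_univ E)
          (fun a _ _ => le_max_right _ _)
  have h2 : ∑ a : Fin 3 → Fin 2, max (viewProb cexpol r a - viewProb cexpol r' a) 0
      ≤ 17/100 := by
    have he : ∀ a : Fin 3 → Fin 2, viewProb cexpol r a - viewProb cexpol r' a =
        1/4 * cexf (a 0) (r 0) (a 1) - 1/4 * cexf (a 0) (r' 0) (a 1) := fun a => by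
      rw [view_eval, view_eval]
    calc ∑ a : Fin 3 → Fin 2, max (viewProb cexpol r a - viewProb cexpol r' a) 0
        = ∑ a : Fin 3 → Fin 2,
            max (1/4 * cexf (a 0) (r 0) (a 1) - 1/4 * cexf (a 0) (r' 0) (a 1)) 0 :=
          Finset.sum_congr rfl fun a _ => by rw [he]
      _ ≤ 17/100 := key_bound (r 0) (r' 0)
  linarith

noncomputable def cexd : Fin 3 → Fin 2 → ℝ :=
  fun s k => if s = 0 then (if k = 0 then 1/2 else 5/2) else 0
noncomputable def cexd' : Fin 3 → Fin 2 → ℝ :=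
  fun s k => if s = 0 then (if k = 0 then -1 else 3/2) else 0

lemma cexd_adj : Adjacent cexd cexd' := by
  refine ⟨0, fun hq => ?_, fun i hi => ?_⟩
  · have := congrFun hq 0
    norm_num [cexd, cexd'] at this
  · funext k
    simp [cexd, cexd', hi]

lemma table_eval (d : Fin 3 → Fin 2 → ℝ) (a : Fin 3 → Fin 2) :
    tableProb cexpol d a = 1/4 * cexf (a 0) (d 0 (a 0)) (a 1) := by
  unfold tableProb
  rw [view_eval]

lemma table_not_dp :
    ¬ IsDP (fun d : Fin 3 → Fin 2 → ℝ => tableProb cexpol d) Adjacent 0 (17/100) := by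
  intro h
  have := h cexd cexd' cexd_adj (Finset.univ.filter fun a : Fin 3 → Fin 2 => a 1 = 1)
  rw [Real.exp_zero, one_mul] at this
  have hs : ∀ d : Fin 3 → Fin 2 → ℝ,
      ∑ a ∈ (Finset.univ.filter fun a : Fin 3 → Fin 2 => a 1 = 1), tableProb cexpol d a
      = ∑ a : Fin 3 → Fin 2,
          (if a 1 = 1 then 1/4 * cexf (a 0) (d 0 (a 0)) (a 1) else 0) := by
    intro d
    rw [Finset.sum_filter]
    exact Finset.sum_congr rfl fun a _ => by rw [table_eval]
  rw [hs, hs, sum_pi3, sum_pi3] at this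
  simp only [Fin.sum_univ_two, Matrix.cons_val_zero, Matrix.cons_val_one, Matrix.head_cons,
    cexf_zero, cexf_one, cexpk_zero, cexpk_one] at this
  norm_num [cexd, cexd', cexp0, cexp1, cexφ0, cexφ1] at this

lemma table_dp_imp_view_dp (π : BPolicy 2) (ε δ : ℝ)
    (h : IsDP (fun d : Fin 3 → Fin 2 → ℝ => tableProb π d) Adjacent ε δ) :
    IsDP (fun r : Fin 3 → ℝ => viewProb π r) Adjacent ε δ := by
  rintro r r' ⟨j, hj, hoff⟩ E
  have hadj : Adjacent (fun s _ => r s : Fin 3 → Fin 2 → ℝ) (fun s _ => r' s) := by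
    refine ⟨j, fun hq => hj (congrFun hq 0), fun i hi => ?_⟩
    funext k
    exact hoff i hi
  have := h (fun s _ => r s) (fun s _ => r' s) hadj E
  simpa [tableProb] using this

/-!
Statement 4: There exist ε ≥ 0, δ ∈ (0,1) and a bandit policy π (with horizon T = 3 and
K = 2 arms) such that the View mechanism V^π satisfies (ε,δ)-DP while the Table
mechanism M^π does not; hence the class of (ε,δ)-Table DP policies is strictly
contained in the class of (ε,δ)-View DP policies.
-/

theorem table_dp_strictly_stronger_than_view_dp :
    ∃ (ε δ : ℝ), 0 ≤ ε ∧ 0 < δ ∧ δ < 1 ∧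
      (∃ π : BPolicy 2, IsBPolicy π ∧
        IsDP (fun r : Fin 3 → ℝ => viewProb π r) Adjacent ε δ ∧
        ¬ IsDP (fun d : Fin 3 → Fin 2 → ℝ => tableProb π d) Adjacent ε δ) ∧
      {π : BPolicy 2 | IsBPolicy π ∧
          IsDP (fun d : Fin 3 → Fin 2 → ℝ => tableProb π d) Adjacent ε δ} ⊂
        {π : BPolicy 2 | IsBPolicy π ∧
          IsDP (fun r : Fin 3 → ℝ => viewProb π r) Adjacent ε δ} := by
  refine ⟨0, 17/100, le_refl 0, by norm_num, by norm_num,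
    ⟨cexpol, cexpol_isBPolicy, view_dp, table_not_dp⟩, ?_⟩
  have hsub : {π : BPolicy 2 | IsBPolicy π ∧
      IsDP (fun d : Fin 3 → Fin 2 → ℝ => tableProb π d) Adjacent 0 (17/100)} ⊆
      {π : BPolicy 2 | IsBPolicy π ∧
      IsDP (fun r : Fin 3 → ℝ => viewProb π r) Adjacent 0 (17/100)} :=
    fun π hπ => ⟨hπ.1, table_dp_imp_view_dp π _ _ hπ.2⟩
  exact (Set.ssubset_iff_of_subset hsub).mpr
    ⟨cexpol, ⟨cexpol_isBPolicy, view_dp⟩, fun hmem => table_not_dp hmem.2⟩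
end CounterexampleAux
end

section
/- A bandit policy π satisfies ρ-Interactive zCDP if and only if, for every deterministic adversary B = (B_t)_{t=1}^T, the post-processed policy π^B is ρ-Table zCDP (i.e. the Table mechanism M^{π^B} is ρ-zCDP), where π^B = (π^B_t)_{t=1}^T is defined by π^B_t(a | a_1, r_1, …, a_{t−1}, r_{t−1}) = π_t(a | B_1(a_1), r_1, B_2(a_1, a_2), r_2, …, B_{t−1}(a_1, …, a_{t−1}), r_{t−1}). -/
/-!
Statement 0: For any bandit policy π and any ε ≥ 0, the Table mechanism M^π
satisfies ε-DP (i.e. (ε,0)-DP) if and only if the View mechanism V^π satisfies ε-DP.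
-/

open scoped BigOperators

/-- A deterministic adversary: given the sequence of actions output by the policy so
far, it returns a query action. (`B` applied to `(o_1, …, o_t)` is `B_t(o_1, …, o_t)`.) -/
abbrev Adversary (K : ℕ) := List (Fin K) → Fin K

/-- The query chosen by the adversary `B` at step `t`, namely `q_t = B_t(o_1, …, o_t)`,
as a function of the full sequence of outputs `o`. -/
def queryOf {K T : ℕ} (B : Adversary K) (o : Fin T → Fin K) (t : Fin T) : Fin K :=
  B (List.ofFn fun s : Fin (t.val + 1) =>
      o ⟨s.val, lt_of_le_of_lt (Nat.lt_succ_iff.mp s.isLt) t.isLt⟩)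

/-- The view of the adversary `B` when the policy `π` interacts with the table of
rewards `d`: the probability that the sequence of outputs is `o`, namely
`∏_t π_t(o_t | q_1, x_{1,q_1}, …, q_{t-1}, x_{t-1,q_{t-1}})` with `q_s = B_s(o_1,…,o_s)`. -/
noncomputable def advView {K T : ℕ} (B : Adversary K) (π : BPolicy K)
    (d : Fin T → Fin K → ℝ) (o : Fin T → Fin K) : ℝ :=
  ∏ t : Fin T,
    π t.val (histOf (queryOf B o) (fun s => d s (queryOf B o s)) t) (o t)

/-- `ρ`-Interactive zCDP: for every (deterministic) adversary `B`, every `α > 1` and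
all neighbouring tables of rewards `d ∼ d'`,
`D_α(View_{B,π,d} ‖ View_{B,π,d'}) ≤ ρα`. -/
def InteractiveZCDP {K : ℕ} (T : ℕ) (ρ : ℝ) (π : BPolicy K) : Prop :=
  ∀ B : Adversary K, ∀ α : ℝ, 1 < α → ∀ d d' : Fin T → Fin K → ℝ, Adjacent d d' →
    renyiDiv α (advView B π d) (advView B π d') ≤ ρ * α

/-- The post-processing `π^B` of the policy `π` by the deterministic adversary `B`:
`π^B_t(a | a_1, r_1, …, a_{t-1}, r_{t-1}) = π_t(a | B_1(a_1), r_1, B_2(a_1,a_2), r_2, …,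
B_{t-1}(a_1,…,a_{t-1}), r_{t-1})`. -/
def advPolicy {K : ℕ} (B : Adversary K) (π : BPolicy K) : BPolicy K :=
  fun t h =>
    π t (List.ofFn fun i : Fin h.length =>
      (B ((h.map Prod.fst).take (i.val + 1)), (h.get i).2))

/-!
Statement 6: A bandit policy π satisfies ρ-Interactive zCDP if and only if, for every
deterministic adversary B, the post-processed policy π^B is ρ-Table zCDP, i.e. the
Table mechanism M^{π^B} is ρ-zCDP.
-/

namespace BanditAux

open Finset

variable {K T : ℕ}

/-- An "entry system": for each step `t`, an (action, reward) pair that may depend on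
the whole output sequence (adaptedness is tracked separately via `Dep`). -/
abbrev ESys (K T : ℕ) := Fin T → (Fin T → Fin K) → Fin K × ℝ

def histE (E : ESys K T) (o : Fin T → Fin K) (t : Fin T) : List (Fin K × ℝ) :=
  List.ofFn fun s : Fin t.val => E (t.embed s) o

noncomputable def W (π : BPolicy K) (E : ESys K T) (o : Fin T → Fin K) : ℝ :=
  ∏ t : Fin T, π t.val (histE E o t) (o t)

noncomputable def g (π : BPolicy K) (α : ℝ) (E E' : ESys K T) (t : Fin T)
    (o : Fin T → Fin K) : ℝ :=
  (π t.val (histE E o t) (o t)) ^ α * (π t.val (histE E' o t) (o t)) ^ (1 - α)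

noncomputable def Sval (π : BPolicy K) (α : ℝ) (E E' : ESys K T) : ℝ :=
  ∑ o : Fin T → Fin K, ∏ t : Fin T, g π α E E' t o

/-- `E` depends only on the outputs at positions in `[m, t]`. -/
def Dep (m : ℕ) (E : ESys K T) : Prop :=
  ∀ (t : Fin T) (o o' : Fin T → Fin K),
    (∀ s : Fin T, m ≤ s.val → s.val ≤ t.val → o s = o' s) → E t o = E t o'

def Eview (B : Adversary K) (d : Fin T → Fin K → ℝ) : ESys K T :=
  fun t o => (queryOf B o t, d t (queryOf B o t))

def Etab (B : Adversary K) (d : Fin T → Fin K → ℝ) : ESys K T :=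
  fun t o => (queryOf B o t, d t (o t))

lemma advView_eq_W (B : Adversary K) (π : BPolicy K) (d : Fin T → Fin K → ℝ) :
    advView B π d = W π (Eview B d) := rfl

lemma advPolicy_hist (B : Adversary K) (π : BPolicy K) (o : Fin T → Fin K)
    (r : Fin T → ℝ) (t : Fin T) :
    advPolicy B π t.val (histOf o r t) =
      π t.val (List.ofFn fun s : Fin t.val => (queryOf B o (t.embed s), r (t.embed s))) := by
  unfold advPolicy
  refine congrArg (π t.val) ?_
  apply List.ext_getElem
  · simp [histOf]
  · intro i h1 h2
    simp only [List.getElem_ofFn]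
    have hi : i < t.val := by simpa [histOf] using h2
    refine Prod.ext ?_ ?_
    · refine congrArg B ?_
      rw [histOf, List.map_ofFn]
      apply List.ext_getElem
      · simp [queryOf, Fin.embed]
        omega
      · intro n hn1 hn2
        rw [List.getElem_take, List.getElem_ofFn, List.getElem_ofFn]
        rfl
    · simp [histOf, List.get_eq_getElem, List.getElem_ofFn, Fin.embed]


lemma tableProb_eq_W (B : Adversary K) (π : BPolicy K) (d : Fin T → Fin K → ℝ) :
    tableProb (advPolicy B π) d = W π (Etab B d) := by
  funext o
  simp only [tableProb, viewProb, W]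
  refine Finset.prod_congr rfl fun t _ => ?_
  rw [advPolicy_hist]
  rfl

lemma g_nonneg {π : BPolicy K} (hπ : IsBPolicy π) {α : ℝ} {E E' : ESys K T}
    {t : Fin T} {o : Fin T → Fin K} : 0 ≤ g π α E E' t o :=
  mul_nonneg (Real.rpow_nonneg ((hπ _ _).1 _) _) (Real.rpow_nonneg ((hπ _ _).1 _) _)

lemma Sval_nonneg {π : BPolicy K} (hπ : IsBPolicy π) {α : ℝ} {E E' : ESys K T} :
    0 ≤ Sval π α E E' :=
  Finset.sum_nonneg fun _ _ => Finset.prod_nonneg fun _ _ => g_nonneg hπ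

/-- If `φ` depends only on coordinates `≤ m` and `ψ` only on coordinates `> m`,
then the sums decouple. -/
lemma sum_mul_sum_card (m : ℕ) (φ ψ : (Fin T → Fin K) → ℝ)
    (hφ : ∀ o o', (∀ t : Fin T, t.val ≤ m → o t = o' t) → φ o = φ o')
    (hψ : ∀ o o', (∀ t : Fin T, m < t.val → o t = o' t) → ψ o = ψ o') :
    (∑ o, φ o) * (∑ o, ψ o) =
      (Fintype.card (Fin T → Fin K) : ℝ) * ∑ o, φ o * ψ o := by
  classical
  set σf : ((Fin T → Fin K) × (Fin T → Fin K)) → ((Fin T → Fin K) × (Fin T → Fin K)) :=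
    fun p => (fun t => if t.val ≤ m then p.1 t else p.2 t,
              fun t => if t.val ≤ m then p.2 t else p.1 t) with hσf
  have hinv : Function.Involutive σf := by
    intro p
    refine Prod.ext ?_ ?_ <;> funext t <;> by_cases h : t.val ≤ m <;> simp [σf, h]
  have key : ∀ p : (Fin T → Fin K) × (Fin T → Fin K),
      φ p.1 * ψ p.2 = φ (σf p).1 * ψ (σf p).1 := by
    intro p
    have h1 : φ p.1 = φ (σf p).1 := hφ _ _ fun t ht => by simp [σf, ht]
    have h2 : ψ p.2 = ψ (σf p).1 := hψ _ _ fun t ht => by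
      simp only [σf]; rw [if_neg (by omega)]
    rw [h1, h2]
  calc (∑ o, φ o) * (∑ o, ψ o)
      = ∑ p : (Fin T → Fin K) × (Fin T → Fin K), φ p.1 * ψ p.2 := by
        rw [Finset.sum_mul_sum]
        rw [← Finset.sum_product']
        rfl
    _ = ∑ p : (Fin T → Fin K) × (Fin T → Fin K), φ (σf p).1 * ψ (σf p).1 :=
        Finset.sum_congr rfl fun p _ => key p
    _ = ∑ p : (Fin T → Fin K) × (Fin T → Fin K), φ p.1 * ψ p.1 :=
        Equiv.sum_comp (hinv.toPerm σf) (fun p => φ p.1 * ψ p.1)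
    _ = (Fintype.card (Fin T → Fin K) : ℝ) * ∑ o, φ o * ψ o := by
        rw [Fintype.sum_prod_type]
        simp only [Finset.sum_const, Finset.card_univ, nsmul_eq_mul]
        rw [← Finset.mul_sum]


lemma step_ineq (hK : 0 < K) {π : BPolicy K} (hπ : IsBPolicy π) (α : ℝ) (m : ℕ) (hm : m < T)
    (E E' : ESys K T) (hE : Dep m E) (hE' : Dep m E') :
    ∃ k : Fin K,
      Sval π α E E' ≤
        Sval π α (fun t o => E t (Function.update o ⟨m, hm⟩ k))
                 (fun t o => E' t (Function.update o ⟨m, hm⟩ k)) := by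
  classical
  haveI : Nonempty (Fin K) := ⟨⟨0, hK⟩⟩
  set m' : Fin T := ⟨m, hm⟩ with hm'
  set A : (Fin T → Fin K) → ℝ :=
    fun o => ∏ t ∈ Finset.univ.filter (fun t : Fin T => t.val ≤ m), g π α E E' t o with hA
  set Bf : (Fin T → Fin K) → ℝ :=
    fun o => ∏ t ∈ Finset.univ.filter (fun t : Fin T => ¬ t.val ≤ m), g π α E E' t o with hBf
  -- low steps have o-independent histories
  have hlow : ∀ (F : ESys K T), Dep m F → ∀ (t : Fin T), t.val ≤ m →
      ∀ o o' : Fin T → Fin K, histE F o t = histE F o' t := by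
    intro F hF t ht o o'
    exact congrArg List.ofFn (funext fun s =>
      hF (t.embed s) o o' (fun s' h1 h2 => absurd h1 (by
        have := s.isLt
        simp only [Fin.embed] at h2
        omega)))
  have hAdep : ∀ o o', (∀ t : Fin T, t.val ≤ m → o t = o' t) → A o = A o' := by
    intro o o' h
    refine Finset.prod_congr rfl fun t ht => ?_
    rw [Finset.mem_filter] at ht
    unfold g
    rw [hlow E hE t ht.2 o o', hlow E' hE' t ht.2 o o', h t ht.2]
  have hBdep : ∀ (k : Fin K) (o o' : Fin T → Fin K), (∀ t : Fin T, m < t.val → o t = o' t) →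
      Bf (Function.update o m' k) = Bf (Function.update o' m' k) := by
    intro k o o' h
    refine Finset.prod_congr rfl fun t ht => ?_
    rw [Finset.mem_filter] at ht
    have htm : m < t.val := by omega
    have htne : t ≠ m' := by
      intro he; rw [he] at htm; exact lt_irrefl _ htm
    have hhist : ∀ (F : ESys K T), Dep m F →
        histE F (Function.update o m' k) t = histE F (Function.update o' m' k) t := by
      intro F hF
      refine congrArg List.ofFn (funext fun s => ?_)
      refine hF (t.embed s) _ _ (fun s' h1 h2 => ?_)
      by_cases hs' : s' = m'
      · subst hs'; simp
      · have hs'v : m < s'.val := by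
          rcases lt_or_eq_of_le h1 with h | h
          · exact h
          · exact absurd (Fin.ext h.symm) hs'
        rw [Function.update_of_ne hs', Function.update_of_ne hs']
        exact h s' hs'v
    unfold g
    rw [hhist E hE, hhist E' hE', Function.update_of_ne htne, Function.update_of_ne htne,
      h t htm]
  have hsplit : ∀ (F F' : ESys K T), Sval π α F F' =
      ∑ o : Fin T → Fin K,
        (∏ t ∈ Finset.univ.filter (fun t : Fin T => t.val ≤ m), g π α F F' t o) *
        (∏ t ∈ Finset.univ.filter (fun t : Fin T => ¬ t.val ≤ m), g π α F F' t o) := by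
    intro F F'
    exact Finset.sum_congr rfl fun o _ =>
      (Finset.prod_filter_mul_prod_filter_not Finset.univ _ _).symm
  obtain ⟨k₀, -, hkmax⟩ := Finset.exists_max_image Finset.univ
    (fun k : Fin K => ∑ o : Fin T → Fin K, Bf (Function.update o m' k)) Finset.univ_nonempty
  refine ⟨k₀, ?_⟩
  set N : ℝ := (Fintype.card (Fin T → Fin K) : ℝ) with hN
  have hNpos : 0 < N := by
    rw [hN]
    exact_mod_cast Fintype.card_pos
  -- indicator decomposition
  have hdec : ∀ (ψ : Fin K → (Fin T → Fin K) → ℝ),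
      ∀ o : Fin T → Fin K, ∑ k : Fin K, (if o m' = k then A o else 0) * ψ k o
        = A o * ψ (o m') o := by
    intro ψ o
    rw [Finset.sum_eq_single (o m')]
    · simp
    · intro k _ hk; rw [if_neg (fun h => hk h.symm), zero_mul]
    · intro h; exact absurd (Finset.mem_univ _) h
  have key : ∀ k k' : Fin K,
      N * ∑ o : Fin T → Fin K, (if o m' = k then A o else 0) * Bf (Function.update o m' k')
        = (∑ o : Fin T → Fin K, if o m' = k then A o else 0)
          * (∑ o : Fin T → Fin K, Bf (Function.update o m' k')) := by
    intro k k'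
    rw [sum_mul_sum_card m (fun o => if o m' = k then A o else 0)
      (fun o => Bf (Function.update o m' k'))]
    · intro o o' h
      have h1 : o m' = o' m' := h m' (le_refl m)
      rw [h1, hAdep o o' h]
    · intro o o' h
      exact hBdep k' o o' h
  have hAnn : ∀ o, 0 ≤ A o := fun o => Finset.prod_nonneg fun t _ => g_nonneg hπ
  -- main chain
  have e1 : Sval π α E E' =
      ∑ k : Fin K, ∑ o : Fin T → Fin K,
        (if o m' = k then A o else 0) * Bf (Function.update o m' k) := by
    rw [hsplit E E', Finset.sum_comm]
    refine Finset.sum_congr rfl fun o _ => ?_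
    have : ∀ k : Fin K, (if o m' = k then A o else 0) * Bf (Function.update o m' k)
        = (if o m' = k then A o else 0) * Bf o := by
      intro k
      by_cases h : o m' = k
      · subst h; rw [Function.update_eq_self]
      · rw [if_neg h, zero_mul, zero_mul]
    rw [Finset.sum_congr rfl fun k _ => this k, ← Finset.sum_mul,
      Finset.sum_ite_eq Finset.univ (o m') (fun _ => A o), if_pos (Finset.mem_univ _)]
  have e2 : ∑ o : Fin T → Fin K, A o * Bf (Function.update o m' k₀) =
      Sval π α (fun t o => E t (Function.update o m' k₀))
               (fun t o => E' t (Function.update o m' k₀)) := by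
    rw [hsplit]
    refine Finset.sum_congr rfl fun o _ => ?_
    congr 1
    · refine Finset.prod_congr rfl fun t ht => ?_
      rw [Finset.mem_filter] at ht
      unfold g
      have hh : ∀ (F : ESys K T), Dep m F →
          histE (fun t o => F t (Function.update o m' k₀)) o t = histE F o t := by
        intro F hF
        exact hlow F hF t ht.2 (Function.update o m' k₀) o
      rw [hh E hE, hh E' hE']
    · refine Finset.prod_congr rfl fun t ht => ?_
      rw [Finset.mem_filter] at ht
      have htne : t ≠ m' := by
        intro he
        apply ht.2; rw [he]
      unfold g
      have hh : ∀ (F : ESys K T),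
          histE F (Function.update o m' k₀) t
            = histE (fun t o => F t (Function.update o m' k₀)) o t := fun F => rfl
      rw [← hh E, ← hh E', Function.update_of_ne htne]
  have chain : N * Sval π α E E' ≤ N * ∑ o : Fin T → Fin K, A o * Bf (Function.update o m' k₀) := by
    rw [e1, Finset.mul_sum]
    calc ∑ k : Fin K, N * ∑ o : Fin T → Fin K,
          (if o m' = k then A o else 0) * Bf (Function.update o m' k)
        = ∑ k : Fin K, (∑ o : Fin T → Fin K, if o m' = k then A o else 0)
            * (∑ o : Fin T → Fin K, Bf (Function.update o m' k)) :=
          Finset.sum_congr rfl fun k _ => key k k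
      _ ≤ ∑ k : Fin K, (∑ o : Fin T → Fin K, if o m' = k then A o else 0)
            * (∑ o : Fin T → Fin K, Bf (Function.update o m' k₀)) := by
          refine Finset.sum_le_sum fun k _ => ?_
          refine mul_le_mul_of_nonneg_left (hkmax k (Finset.mem_univ _)) ?_
          refine Finset.sum_nonneg fun o _ => ?_
          by_cases h : o m' = k
          · rw [if_pos h]; exact hAnn o
          · rw [if_neg h]
      _ = ∑ k : Fin K, N * ∑ o : Fin T → Fin K,
            (if o m' = k then A o else 0) * Bf (Function.update o m' k₀) :=
          Finset.sum_congr rfl fun k _ => (key k k₀).symm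
      _ = N * ∑ o : Fin T → Fin K, A o * Bf (Function.update o m' k₀) := by
          rw [← Finset.mul_sum]
          congr 1
          rw [Finset.sum_comm]
          exact Finset.sum_congr rfl fun o _ => hdec (fun k o => Bf (Function.update o m' k₀)) o
  rw [e2] at chain
  exact le_of_mul_le_mul_left chain hNpos


lemma flatten (hK : 0 < K) {π : BPolicy K} (hπ : IsBPolicy π) (α : ℝ) (j : Fin T) :
    ∀ (n m : ℕ), m + n = T → ∀ (E E' : ESys K T), Dep m E → Dep m E' →
      (∀ t o, (E t o).1 = (E' t o).1) → (∀ t o, t ≠ j → E t o = E' t o) →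
      ∃ H H' : Fin T → Fin K × ℝ, (∀ t, (H t).1 = (H' t).1) ∧ (∀ t, t ≠ j → H t = H' t) ∧
        Sval π α E E' ≤ Sval π α (fun t _ => H t) (fun t _ => H' t) := by
  intro n
  induction n with
  | zero =>
    intro m hmT E E' hE hE' hfst hoff
    have hconst : ∀ (F : ESys K T), Dep m F → ∀ (t : Fin T) (o o' : Fin T → Fin K),
        F t o = F t o' := by
      intro F hF t o o'
      refine hF t o o' (fun s h1 h2 => ?_)
      exact absurd h1 (by have := s.isLt; omega)
    set o₀ : Fin T → Fin K := fun _ => ⟨0, hK⟩ with ho₀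
    refine ⟨fun t => E t o₀, fun t => E' t o₀, fun t => hfst t o₀,
      fun t ht => hoff t o₀ ht, le_of_eq ?_⟩
    refine Finset.sum_congr rfl fun o _ => Finset.prod_congr rfl fun t _ => ?_
    unfold g
    have h1 : histE E o t = histE (fun t _ => E t o₀) o t :=
      congrArg List.ofFn (funext fun s => hconst E hE (t.embed s) o o₀)
    have h2 : histE E' o t = histE (fun t _ => E' t o₀) o t :=
      congrArg List.ofFn (funext fun s => hconst E' hE' (t.embed s) o o₀)
    rw [h1, h2]
  | succ n ih =>
    intro m hmT E E' hE hE' hfst hoff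
    have hm : m < T := by omega
    obtain ⟨k, hk⟩ := step_ineq hK hπ α m hm E E' hE hE'
    have hDepF : ∀ (F : ESys K T), Dep m F →
        Dep (m + 1) (fun t o => F t (Function.update o ⟨m, hm⟩ k)) := by
      intro F hF t o o' h
      refine hF t _ _ (fun s h1 h2 => ?_)
      by_cases hs : s = ⟨m, hm⟩
      · subst hs; simp
      · have hsv : m < s.val := by
          rcases lt_or_eq_of_le h1 with h' | h'
          · exact h'
          · exact absurd (Fin.ext h'.symm) hs
        rw [Function.update_of_ne hs, Function.update_of_ne hs]
        exact h s (by omega) h2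
    obtain ⟨H, H', h1, h2, h3⟩ := ih (m + 1) (by omega)
      (fun t o => E t (Function.update o ⟨m, hm⟩ k))
      (fun t o => E' t (Function.update o ⟨m, hm⟩ k))
      (hDepF E hE) (hDepF E' hE')
      (fun t o => hfst t _) (fun t o ht => by rw [hoff t _ ht])
    exact ⟨H, H', h1, h2, le_trans hk h3⟩

lemma renyi_W {π : BPolicy K} (hπ : IsBPolicy π) (α : ℝ) (E E' : ESys K T) :
    renyiDiv α (W π E) (W π E') = (α - 1)⁻¹ * Real.log (Sval π α E E') := by
  unfold renyiDiv Sval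
  congr 2
  refine Finset.sum_congr rfl fun o _ => ?_
  unfold W g
  rw [← Real.finset_prod_rpow _ _ (fun t _ => (hπ _ _).1 _) α,
    ← Real.finset_prod_rpow _ _ (fun t _ => (hπ _ _).1 _) (1 - α),
    ← Finset.prod_mul_distrib]

lemma rpow_self_mul {p α : ℝ} (hp : 0 ≤ p) (hα : 1 < α) : p ^ α * p ^ (1 - α) = p := by
  rcases hp.eq_or_lt with h | h
  · rw [← h, Real.zero_rpow (by linarith), zero_mul]
  · rw [← Real.rpow_add h]
    norm_num

lemma sum_prod_one {π : BPolicy K} (hπ : IsBPolicy π) (L : Fin T → List (Fin K × ℝ)) :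
    ∑ o : Fin T → Fin K, ∏ t : Fin T, π t.val (L t) (o t) = 1 := by
  classical
  rw [← Fintype.piFinset_univ,
    ← Finset.prod_univ_sum (fun _ : Fin T => (Finset.univ : Finset (Fin K)))
      (fun t a => π t.val (L t) a)]
  exact Finset.prod_eq_one fun t _ => (hπ t.val (L t)).2

lemma Sval_const_self {π : BPolicy K} (hπ : IsBPolicy π) {α : ℝ} (hα : 1 < α)
    (H : Fin T → Fin K × ℝ) :
    Sval π α (fun t _ => H t) (fun t _ => H t) = 1 := by
  have h2 : Sval π α (fun t _ => H t) (fun t _ => H t)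
      = ∑ o : Fin T → Fin K, ∏ t : Fin T,
          π t.val (List.ofFn fun s : Fin t.val => H (t.embed s)) (o t) :=
    Finset.sum_congr rfl fun o _ => Finset.prod_congr rfl fun t _ =>
      rpow_self_mul ((hπ _ _).1 _) hα
  rw [h2]
  exact sum_prod_one hπ _

lemma renyi_self {α : ℝ} (hα : 1 < α) (p : (Fin T → Fin K) → ℝ) (hp : ∀ o, 0 ≤ p o)
    (h1 : ∑ o, p o = 1) : renyiDiv α p p = 0 := by
  unfold renyiDiv
  have h2 : ∑ x, p x ^ α * p x ^ (1 - α) = ∑ x, p x :=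
    Finset.sum_congr rfl fun o _ => rpow_self_mul (hp o) hα
  rw [h2, h1, Real.log_one, mul_zero]

lemma dep0_Eview (B : Adversary K) (d : Fin T → Fin K → ℝ) : Dep 0 (Eview B d) := by
  intro t o o' h
  have hq : queryOf B o t = queryOf B o' t := by
    unfold queryOf
    exact congrArg B (congrArg List.ofFn (funext fun s =>
      h _ (Nat.zero_le _) (Nat.lt_succ_iff.mp s.isLt)))
  unfold Eview
  rw [hq]

lemma dep0_Etab (B : Adversary K) (d : Fin T → Fin K → ℝ) : Dep 0 (Etab B d) := by
  intro t o o' h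
  have hq : queryOf B o t = queryOf B o' t := by
    unfold queryOf
    exact congrArg B (congrArg List.ofFn (funext fun s =>
      h _ (Nat.zero_le _) (Nat.lt_succ_iff.mp s.isLt)))
  unfold Etab
  rw [hq, h t (Nat.zero_le _) (le_refl _)]


section Rho

variable {π : BPolicy K}

/-- Degenerate instance: constant adversary, zero table, and the table differing
only in the last row (which is never read). -/
lemma rho_nonneg_view (hK : 0 < K) (hT : 0 < T) (hπ : IsBPolicy π) {ρ : ℝ}
    (hA : InteractiveZCDP T ρ π) : 0 ≤ ρ := by
  set jl : Fin T := ⟨T - 1, by omega⟩ with hjl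
  set B0 : Adversary K := fun _ => ⟨0, hK⟩ with hB0
  set d0 : Fin T → Fin K → ℝ := fun _ _ => 0 with hd0
  set d1 : Fin T → Fin K → ℝ := Function.update d0 jl (fun _ => 1) with hd1
  set Lc : Fin T → List (Fin K × ℝ) :=
    fun t => List.ofFn fun _ : Fin t.val => ((⟨0, hK⟩ : Fin K), (0 : ℝ)) with hLc
  set pv : (Fin T → Fin K) → ℝ := fun o => ∏ t : Fin T, π t.val (Lc t) (o t) with hpv
  have hadj : Adjacent d0 d1 := by
    refine ⟨jl, ?_, fun i hi => (Function.update_of_ne hi _ d0).symm⟩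
    rw [hd1, Function.update_self]
    intro h
    have := congrFun h ⟨0, hK⟩
    norm_num [hd0] at this
  have h0 : advView B0 π d0 = pv := rfl
  have h1 : advView B0 π d1 = pv := by
    funext o
    refine Finset.prod_congr rfl fun t _ => ?_
    refine congrArg₂ _ (congrArg List.ofFn (funext fun s => ?_)) rfl
    refine congrArg₂ Prod.mk rfl ?_
    have hne : t.embed s ≠ jl := by
      refine Fin.ne_of_val_ne ?_
      have h1 := s.isLt
      have h2 := t.isLt
      simp only [Fin.embed, hjl]
      omega
    show d1 (t.embed s) (queryOf B0 o (t.embed s)) = (0 : ℝ)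
    rw [hd1, Function.update_of_ne hne]
  have hkey := hA B0 2 one_lt_two d0 d1 hadj
  rw [h0, h1, renyi_self one_lt_two pv
    (fun o => Finset.prod_nonneg fun t _ => (hπ _ _).1 _) (sum_prod_one hπ Lc)] at hkey
  linarith

lemma rho_nonneg_tab (hK : 0 < K) (hT : 0 < T) (hπ : IsBPolicy π) {ρ : ℝ}
    (hB : ∀ B : Adversary K,
      IsZCDP (fun d : Fin T → Fin K → ℝ => tableProb (advPolicy B π) d) Adjacent ρ) :
    0 ≤ ρ := by
  set jl : Fin T := ⟨T - 1, by omega⟩ with hjl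
  set B0 : Adversary K := fun _ => ⟨0, hK⟩ with hB0
  set d0 : Fin T → Fin K → ℝ := fun _ _ => 0 with hd0
  set d1 : Fin T → Fin K → ℝ := Function.update d0 jl (fun _ => 1) with hd1
  set Lc : Fin T → List (Fin K × ℝ) :=
    fun t => List.ofFn fun _ : Fin t.val => ((⟨0, hK⟩ : Fin K), (0 : ℝ)) with hLc
  set pv : (Fin T → Fin K) → ℝ := fun o => ∏ t : Fin T, π t.val (Lc t) (o t) with hpv
  have hadj : Adjacent d0 d1 := by
    refine ⟨jl, ?_, fun i hi => (Function.update_of_ne hi _ d0).symm⟩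
    rw [hd1, Function.update_self]
    intro h
    have := congrFun h ⟨0, hK⟩
    norm_num [hd0] at this
  have hq : ∀ o (t : Fin T), queryOf B0 o t = ⟨0, hK⟩ := fun o t => rfl
  have h0 : tableProb (advPolicy B0 π) d0 = pv := by
    rw [tableProb_eq_W]; rfl
  have h1 : tableProb (advPolicy B0 π) d1 = pv := by
    rw [tableProb_eq_W]
    funext o
    refine Finset.prod_congr rfl fun t _ => ?_
    refine congrArg₂ _ (congrArg List.ofFn (funext fun s => ?_)) rfl
    refine congrArg₂ Prod.mk rfl ?_
    have hne : t.embed s ≠ jl := by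
      refine Fin.ne_of_val_ne ?_
      have h1 := s.isLt
      have h2 := t.isLt
      simp only [Fin.embed, hjl]
      omega
    show d1 (t.embed s) _ = 0
    rw [hd1, Function.update_of_ne hne]
  have hkey := hB B0 2 one_lt_two d0 d1 hadj
  simp only [] at hkey
  rw [h0, h1, renyi_self one_lt_two pv
    (fun o => Finset.prod_nonneg fun t _ => (hπ _ _).1 _) (sum_prod_one hπ Lc)] at hkey
  linarith

end Rho

lemma core (hK : 0 < K) {π : BPolicy K} (hπ : IsBPolicy π) {ρ α : ℝ} (hα : 1 < α)
    (hρ : 0 ≤ ρ) (j : Fin T)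
    (HYP : ∀ H H' : Fin T → Fin K × ℝ, (∀ t, (H t).1 = (H' t).1) →
      (∀ t, t ≠ j → H t = H' t) → (H j).2 ≠ (H' j).2 →
      Sval π α (fun t _ => H t) (fun t _ => H' t) ≤ Real.exp ((α - 1) * (ρ * α)))
    (E E' : ESys K T) (hE : Dep 0 E) (hE' : Dep 0 E')
    (hfst : ∀ t o, (E t o).1 = (E' t o).1) (hoff : ∀ t o, t ≠ j → E t o = E' t o) :
    renyiDiv α (W π E) (W π E') ≤ ρ * α := by
  obtain ⟨H, H', h1, h2, hle⟩ := flatten hK hπ α j T 0 (by omega) E E' hE hE' hfst hoff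
  have hb : Sval π α (fun t _ => H t) (fun t _ => H' t) ≤ Real.exp ((α - 1) * (ρ * α)) := by
    by_cases hj : (H j).2 = (H' j).2
    · have hHH : H = H' := funext fun t => by
        by_cases ht : t = j
        · subst ht; exact Prod.ext (h1 t) hj
        · exact h2 t ht
      rw [hHH, Sval_const_self hπ hα]
      exact Real.one_le_exp (mul_nonneg (by linarith) (mul_nonneg hρ (by linarith)))
    · exact HYP H H' h1 h2 hj
  have hS : Sval π α E E' ≤ Real.exp ((α - 1) * (ρ * α)) := le_trans hle hb
  rw [renyi_W hπ]
  rcases (Sval_nonneg hπ (α := α) (E := E) (E' := E')).eq_or_lt with h | h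
  · rw [← h, Real.log_zero, mul_zero]
    exact mul_nonneg hρ (by linarith)
  · have hlog : Real.log (Sval π α E E') ≤ (α - 1) * (ρ * α) := by
      calc Real.log (Sval π α E E') ≤ Real.log (Real.exp ((α - 1) * (ρ * α))) :=
            Real.log_le_log h hS
        _ = (α - 1) * (ρ * α) := Real.log_exp _
    calc (α - 1)⁻¹ * Real.log (Sval π α E E')
        ≤ (α - 1)⁻¹ * ((α - 1) * (ρ * α)) :=
          mul_le_mul_of_nonneg_left hlog (inv_nonneg.mpr (by linarith))
      _ = ρ * α := inv_mul_cancel_left₀ (show α - 1 ≠ 0 by linarith) _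

def constAdv (hK : 0 < K) (H : Fin T → Fin K × ℝ) : Adversary K :=
  fun l => if h : l.length - 1 < T then (H ⟨l.length - 1, h⟩).1 else ⟨0, hK⟩

lemma queryOf_constAdv (hK : 0 < K) (H : Fin T → Fin K × ℝ) (o : Fin T → Fin K)
    (t : Fin T) : queryOf (constAdv hK H) o t = (H t).1 := by
  unfold queryOf constAdv
  simp only [List.length_ofFn, Nat.add_sub_cancel]
  rw [dif_pos t.isLt]

lemma Eview_const (hK : 0 < K) (H : Fin T → Fin K × ℝ) (r : Fin T → ℝ) :
    Eview (constAdv hK H) (fun t _ => r t) =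
      fun (t : Fin T) (_ : Fin T → Fin K) => ((H t).1, r t) := by
  funext t o
  unfold Eview
  rw [queryOf_constAdv]

lemma Etab_const (hK : 0 < K) (H : Fin T → Fin K × ℝ) (r : Fin T → ℝ) :
    Etab (constAdv hK H) (fun t _ => r t) =
      fun (t : Fin T) (_ : Fin T → Fin K) => ((H t).1, r t) := by
  funext t o
  unfold Etab
  rw [queryOf_constAdv]

lemma exp_bound_of_renyi {π : BPolicy K} (hπ : IsBPolicy π) {ρ α : ℝ} (hα : 1 < α)
    {E E' : ESys K T} (h : renyiDiv α (W π E) (W π E') ≤ ρ * α) :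
    Sval π α E E' ≤ Real.exp ((α - 1) * (ρ * α)) := by
  rw [renyi_W hπ] at h
  have hlog : Real.log (Sval π α E E') ≤ (α - 1) * (ρ * α) := by
    have h' := mul_le_mul_of_nonneg_left h (le_of_lt (sub_pos.mpr hα))
    rwa [← mul_assoc, mul_inv_cancel₀ (by linarith : α - 1 ≠ 0), one_mul] at h'
  rcases (Sval_nonneg hπ (α := α) (E := E) (E' := E')).eq_or_lt with h0 | h0
  · rw [← h0]; exact (Real.exp_pos _).le
  · calc Sval π α E E' = Real.exp (Real.log (Sval π α E E')) := (Real.exp_log h0).symm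
      _ ≤ _ := Real.exp_le_exp.mpr hlog

lemma hyp_of_view (hK : 0 < K) {π : BPolicy K} (hπ : IsBPolicy π) {ρ α : ℝ} (hα : 1 < α)
    (hA : InteractiveZCDP T ρ π) (j : Fin T) :
    ∀ H H' : Fin T → Fin K × ℝ, (∀ t, (H t).1 = (H' t).1) →
      (∀ t, t ≠ j → H t = H' t) → (H j).2 ≠ (H' j).2 →
      Sval π α (fun t _ => H t) (fun t _ => H' t) ≤ Real.exp ((α - 1) * (ρ * α)) := by
  intro H H' h1 h2 hne
  have hadj : Adjacent (fun (t : Fin T) (_ : Fin K) => (H t).2)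
      (fun (t : Fin T) (_ : Fin K) => (H' t).2) :=
    ⟨j, fun h => hne (congrFun h ⟨0, hK⟩),
      fun i hi => funext fun a => congrArg Prod.snd (h2 i hi)⟩
  have hA' := hA (constAdv hK H) α hα _ _ hadj
  rw [advView_eq_W, advView_eq_W, Eview_const, Eview_const] at hA'
  have e1 : (fun (t : Fin T) (_ : Fin T → Fin K) => ((H t).1, (H t).2)) =
      fun (t : Fin T) (_ : Fin T → Fin K) => H t := by
    funext t o; exact Prod.ext rfl rfl
  have e2 : (fun (t : Fin T) (_ : Fin T → Fin K) => ((H t).1, (H' t).2)) =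
      fun (t : Fin T) (_ : Fin T → Fin K) => H' t := by
    funext t o; exact Prod.ext (h1 t) rfl
  rw [e1, e2] at hA'
  exact exp_bound_of_renyi hπ hα hA'

lemma hyp_of_tab (hK : 0 < K) {π : BPolicy K} (hπ : IsBPolicy π) {ρ α : ℝ} (hα : 1 < α)
    (hB : ∀ B : Adversary K,
      IsZCDP (fun d : Fin T → Fin K → ℝ => tableProb (advPolicy B π) d) Adjacent ρ)
    (j : Fin T) :
    ∀ H H' : Fin T → Fin K × ℝ, (∀ t, (H t).1 = (H' t).1) →
      (∀ t, t ≠ j → H t = H' t) → (H j).2 ≠ (H' j).2 →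
      Sval π α (fun t _ => H t) (fun t _ => H' t) ≤ Real.exp ((α - 1) * (ρ * α)) := by
  intro H H' h1 h2 hne
  have hadj : Adjacent (fun (t : Fin T) (_ : Fin K) => (H t).2)
      (fun (t : Fin T) (_ : Fin K) => (H' t).2) :=
    ⟨j, fun h => hne (congrFun h ⟨0, hK⟩),
      fun i hi => funext fun a => congrArg Prod.snd (h2 i hi)⟩
  have hB' := hB (constAdv hK H) α hα _ _ hadj
  simp only [] at hB'
  rw [tableProb_eq_W, tableProb_eq_W, Etab_const, Etab_const] at hB'
  have e1 : (fun (t : Fin T) (_ : Fin T → Fin K) => ((H t).1, (H t).2)) =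
      fun (t : Fin T) (_ : Fin T → Fin K) => H t := by
    funext t o; exact Prod.ext rfl rfl
  have e2 : (fun (t : Fin T) (_ : Fin T → Fin K) => ((H t).1, (H' t).2)) =
      fun (t : Fin T) (_ : Fin T → Fin K) => H' t := by
    funext t o; exact Prod.ext (h1 t) rfl
  rw [e1, e2] at hB'
  exact exp_bound_of_renyi hπ hα hB'

end BanditAux

theorem interactive_zcdp_iff_table_zcdp_of_postprocessed {K T : ℕ} (π : BPolicy K)
    (hπ : IsBPolicy π) (ρ : ℝ) :
    InteractiveZCDP T ρ π ↔
      ∀ B : Adversary K,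
        IsZCDP (fun d : Fin T → Fin K → ℝ => tableProb (advPolicy B π) d) Adjacent ρ := by
  have hK : 0 < K := by
    by_contra hc
    push_neg at hc
    have h0 : K = 0 := by omega
    subst h0
    simpa using (hπ 0 []).2
  constructor
  · intro hA C α hα d d' hadj
    obtain ⟨j, hj1, hj2⟩ := hadj
    have hT : 0 < T := lt_of_le_of_lt (Nat.zero_le _) j.isLt
    have hρ : 0 ≤ ρ := BanditAux.rho_nonneg_view hK hT hπ hA
    show renyiDiv α (tableProb (advPolicy C π) d) (tableProb (advPolicy C π) d') ≤ ρ * α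
    rw [BanditAux.tableProb_eq_W, BanditAux.tableProb_eq_W]
    refine BanditAux.core hK hπ hα hρ j (BanditAux.hyp_of_view hK hπ hα hA j)
      _ _ (BanditAux.dep0_Etab C d) (BanditAux.dep0_Etab C d')
      (fun t o => rfl) (fun t o ht => ?_)
    show (queryOf C o t, d t (o t)) = (queryOf C o t, d' t (o t))
    rw [hj2 t ht]
  · intro hB B α hα d d' hadj
    obtain ⟨j, hj1, hj2⟩ := hadj
    have hT : 0 < T := lt_of_le_of_lt (Nat.zero_le _) j.isLt
    have hρ : 0 ≤ ρ := BanditAux.rho_nonneg_tab hK hT hπ hB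
    rw [BanditAux.advView_eq_W, BanditAux.advView_eq_W]
    refine BanditAux.core hK hπ hα hρ j (BanditAux.hyp_of_tab hK hπ hα hB j)
      _ _ (BanditAux.dep0_Eview B d) (BanditAux.dep0_Eview B d')
      (fun t o => rfl) (fun t o ht => ?_)
    show (queryOf B o t, d t (queryOf B o t)) = (queryOf B o t, d' t (queryOf B o t))
    rw [hj2 t ht]
end

section
/- Let X_1, …, X_n be i.i.d. random variables taking values in [0,1] with E[X_i] = μ, let μ̂_n = (1/n)∑_{i=1}^n X_i, and let Z_n ∼ N(0, 1/(2ρn²)) be independent Gaussian noise. Then for every δ ∈ (0,1]: (i) P( μ̂_n + Z_n − √((1/(2n) + 1/(ρn²))·log(1/δ)) ≥ μ ) ≤ δ, and (ii) P( μ̂_n + Z_n + √((1/(2n) + 1/(ρn²))·log(1/δ)) ≤ μ ) ≤ δ. -/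
/-!
Statement 15: Let X_1, …, X_n be i.i.d. random variables in [0,1] with mean μ, let
μ̂_n be their empirical mean, and let Z_n ∼ N(0, 1/(2ρn²)) be independent Gaussian
noise. Then for every δ ∈ (0,1]:
(i)  P( μ̂_n + Z_n − √((1/(2n) + 1/(ρn²))·log(1/δ)) ≥ μ ) ≤ δ, and
(ii) P( μ̂_n + Z_n + √((1/(2n) + 1/(ρn²))·log(1/δ)) ≤ μ ) ≤ δ.
-/

open MeasureTheory ProbabilityTheory


open Real
open scoped NNReal ENNReal

lemma aux_quad {g H : ℝ} (hg : 0 ≤ g) (hgh : g ≤ H) : g * H - g * g ≤ 1 / 4 * H ^ 2 := by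
  nlinarith [sq_nonneg (H - 2 * g)]

lemma aux_hoeffding_core {p : ℝ} (hp0 : 0 ≤ p) (hp1 : p ≤ 1) (t : ℝ) :
    1 - p + p * rexp t ≤ rexp (p * t + t ^ 2 / 8) := by
  set h : ℝ → ℝ := fun s => 1 - p + p * rexp s with hh
  have hpos : ∀ s, 0 < h s := by
    intro s
    rcases eq_or_lt_of_le hp1 with h1 | h1
    · have : 0 < p * rexp s := by rw [h1]; positivity
      simp only [hh]; nlinarith
    · have : 0 ≤ p * rexp s := by positivity
      simp only [hh]; nlinarith
  set f : ℝ → ℝ := fun s => Real.log (h s) - (p * s + s ^ 2 / 8) with hf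
  set f' : ℝ → ℝ := fun s => p * rexp s / h s - (p + s / 4) with hf'
  have hderiv : ∀ s, HasDerivAt f (f' s) s := by
    intro s
    have h1 : HasDerivAt h (p * rexp s) s := by
      exact ((Real.hasDerivAt_exp s).const_mul p).const_add (1 - p)
    have h2 : HasDerivAt (fun s => Real.log (h s)) (p * rexp s / h s) s :=
      h1.log (hpos s).ne'
    have h4 : HasDerivAt (fun s : ℝ => p * s) p s := by
      simpa using (hasDerivAt_id s).const_mul p
    have h5 : HasDerivAt (fun s : ℝ => s ^ 2 / 8) (s / 4) s := by
      have hd := (hasDerivAt_pow 2 s).div_const 8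
      have he : ((2 : ℕ) : ℝ) * s ^ (2 - 1) / 8 = s / 4 := by
        push_cast
        ring
      rwa [he] at hd
    have h3 : HasDerivAt (fun s : ℝ => p * s + s ^ 2 / 8) (p + s / 4) s := h4.add h5
    exact h2.sub h3
  have hderiv' : ∀ s, HasDerivAt f'
      ((p * rexp s * h s - p * rexp s * (p * rexp s)) / (h s) ^ 2 - 1 / 4) s := by
    intro s
    have h1 : HasDerivAt h (p * rexp s) s := by
      exact ((Real.hasDerivAt_exp s).const_mul p).const_add (1 - p)
    have h2 : HasDerivAt (fun s => p * rexp s) (p * rexp s) s :=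
      (Real.hasDerivAt_exp s).const_mul p
    have h3 : HasDerivAt (fun s => p * rexp s / h s)
        ((p * rexp s * h s - p * rexp s * (p * rexp s)) / (h s) ^ 2) s :=
      h2.div h1 (hpos s).ne'
    have h4 : HasDerivAt (fun s : ℝ => p + s / 4) (1 / 4) s := by
      simpa using ((hasDerivAt_id s).div_const 4).const_add p
    exact h3.sub h4
  have hsecond : ∀ s, (p * rexp s * h s - p * rexp s * (p * rexp s)) / (h s) ^ 2 - 1 / 4 ≤ 0 := by
    intro s
    have hg0 : 0 ≤ p * rexp s := by positivity
    have hgh : p * rexp s ≤ h s := by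
      simp only [hh]; nlinarith
    have hhp := hpos s
    rw [sub_nonpos, div_le_iff₀ (by positivity)]
    exact aux_quad hg0 hgh
  have hdf : Differentiable ℝ f := fun x => (hderiv x).differentiableAt
  have hf'anti : Antitone f' := by
    refine antitone_of_deriv_nonpos (fun s => (hderiv' s).differentiableAt) (fun s => ?_)
    rw [(hderiv' s).deriv]; exact hsecond s
  have hf'0 : f' 0 = 0 := by
    simp only [hf', hh, Real.exp_zero]
    have h1 : 1 - p + p * 1 = 1 := by ring
    rw [h1]
    ring
  have hfle : ∀ s, f s ≤ f 0 := by
    intro s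
    rcases le_total s 0 with hs | hs
    · have hmono : MonotoneOn f (Set.Iic 0) := by
        refine monotoneOn_of_deriv_nonneg (convex_Iic 0) hdf.continuous.continuousOn
          (fun x _ => hdf.differentiableAt.differentiableWithinAt) ?_
        intro x hx
        rw [(hderiv x).deriv]
        rw [interior_Iic] at hx
        have := hf'anti (le_of_lt hx)
        rw [hf'0] at this
        exact this
      exact hmono hs Set.self_mem_Iic hs
    · have hanti : AntitoneOn f (Set.Ici 0) := by
        refine antitoneOn_of_deriv_nonpos (convex_Ici 0) hdf.continuous.continuousOn
          (fun x _ => hdf.differentiableAt.differentiableWithinAt) ?_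
        intro x hx
        rw [(hderiv x).deriv]
        rw [interior_Ici] at hx
        have := hf'anti (le_of_lt hx)
        rw [hf'0] at this
        exact this
      exact hanti Set.self_mem_Ici hs hs
  have hf0 : f 0 = 0 := by
    simp only [hf, hh, Real.exp_zero]
    norm_num
  have hft := hfle t
  rw [hf0, hf, sub_nonpos] at hft
  calc 1 - p + p * rexp t = h t := rfl
    _ ≤ rexp (p * t + t ^ 2 / 8) := by
        rw [← Real.exp_log (hpos t)]
        exact Real.exp_le_exp.2 hft

lemma aux_gauss_pdf_identity {v : ℝ≥0} (hv : v ≠ 0) (t x : ℝ) :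
    gaussianPDFReal 0 v x * rexp (t * x) =
      rexp ((v : ℝ) * t ^ 2 / 2) * gaussianPDFReal (t * v) v x := by
  have hv' : (v : ℝ) ≠ 0 := by exact_mod_cast hv
  simp only [gaussianPDFReal]
  rw [mul_assoc, ← Real.exp_add]
  have key : -(x - 0) ^ 2 / (2 * (v : ℝ)) + t * x =
      -(x - t * (v : ℝ)) ^ 2 / (2 * (v : ℝ)) + (v : ℝ) * t ^ 2 / 2 := by
    field_simp
    ring
  rw [key, Real.exp_add, ← mul_assoc]
  ring

lemma aux_gauss_repr {v : ℝ≥0} (hv : v ≠ 0) (g : ℝ → ℝ) :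
    (∫ x, g x ∂(gaussianReal 0 v)) =
      ∫ x, gaussianPDFReal 0 v x * g x := by
  rw [gaussianReal_of_var_ne_zero 0 hv]
  have hmeas : Measurable (fun x => (gaussianPDFReal 0 v x).toNNReal) :=
    (measurable_gaussianPDFReal 0 v).real_toNNReal
  have : (gaussianPDF 0 v) = fun x => ((gaussianPDFReal 0 v x).toNNReal : ℝ≥0∞) := rfl
  rw [this, integral_withDensity_eq_integral_smul hmeas]
  congr 1 with x
  rw [NNReal.smul_def, Real.coe_toNNReal _ (gaussianPDFReal_nonneg 0 v x)]
  rfl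

lemma aux_gauss_integrable {v : ℝ≥0} (hv : v ≠ 0) (t : ℝ) :
    Integrable (fun x => rexp (t * x)) (gaussianReal 0 v) := by
  rw [gaussianReal_of_var_ne_zero 0 hv]
  have hmeas : Measurable (fun x => (gaussianPDFReal 0 v x).toNNReal) :=
    (measurable_gaussianPDFReal 0 v).real_toNNReal
  have h1 : (gaussianPDF 0 v) = fun x => ((gaussianPDFReal 0 v x).toNNReal : ℝ≥0∞) := rfl
  rw [h1, integrable_withDensity_iff_integrable_smul hmeas]
  have h2 : (fun x => (gaussianPDFReal 0 v x).toNNReal • rexp (t * x)) =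
      fun x => rexp ((v : ℝ) * t ^ 2 / 2) * gaussianPDFReal (t * v) v x := by
    funext x
    rw [NNReal.smul_def, Real.coe_toNNReal _ (gaussianPDFReal_nonneg 0 v x)]
    exact aux_gauss_pdf_identity hv t x
  rw [h2]
  exact (integrable_gaussianPDFReal _ _).const_mul _

lemma aux_gauss_mgf {v : ℝ≥0} (hv : v ≠ 0) (t : ℝ) :
    (∫ x, rexp (t * x) ∂(gaussianReal 0 v)) = rexp ((v : ℝ) * t ^ 2 / 2) := by
  rw [aux_gauss_repr hv]
  have h2 : (fun x => gaussianPDFReal 0 v x * rexp (t * x)) =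
      fun x => rexp ((v : ℝ) * t ^ 2 / 2) * gaussianPDFReal (t * v) v x := by
    funext x; exact aux_gauss_pdf_identity hv t x
  rw [h2, integral_const_mul, integral_gaussianPDFReal_eq_one _ hv, mul_one]

lemma aux_int_exp {Ω : Type*} [MeasurableSpace Ω] {P : Measure Ω} [IsProbabilityMeasure P]
    {X : Ω → ℝ} (hX : Measurable X) (hr : ∀ᵐ ω ∂P, X ω ∈ Set.Icc (0 : ℝ) 1) (t : ℝ) :
    Integrable (fun ω => rexp (t * X ω)) P := by
  refine Integrable.mono' (integrable_const (rexp |t|))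
    ((hX.const_mul t).exp.aestronglyMeasurable) ?_
  filter_upwards [hr] with ω h
  rw [Real.norm_eq_abs, abs_of_nonneg (Real.exp_nonneg _)]
  apply Real.exp_le_exp.2
  calc t * X ω ≤ |t| * X ω := mul_le_mul_of_nonneg_right (le_abs_self t) h.1
    _ ≤ |t| * 1 := mul_le_mul_of_nonneg_left h.2 (abs_nonneg t)
    _ = |t| := mul_one _

lemma aux_mgf_le {Ω : Type*} [MeasurableSpace Ω] {P : Measure Ω} [IsProbabilityMeasure P]
    {X : Ω → ℝ} (hX : Measurable X) (hr : ∀ᵐ ω ∂P, X ω ∈ Set.Icc (0 : ℝ) 1)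
    {μ : ℝ} (hm : ∫ ω, X ω ∂P = μ) (hμ0 : 0 ≤ μ) (hμ1 : μ ≤ 1) (t : ℝ) :
    mgf X P t ≤ rexp (μ * t + t ^ 2 / 8) := by
  have hXint : Integrable X P := by
    refine Integrable.mono' (integrable_const 1) hX.aestronglyMeasurable ?_
    filter_upwards [hr] with ω h
    rw [Real.norm_eq_abs, abs_of_nonneg h.1]; exact h.2
  have hint := aux_int_exp hX hr t
  have hpt : ∀ᵐ ω ∂P, rexp (t * X ω) ≤ 1 - X ω + X ω * rexp t := by
    filter_upwards [hr] with ω h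
    have hcx := convexOn_exp.2 (Set.mem_univ (0 : ℝ)) (Set.mem_univ t)
      (by linarith [h.2] : (0 : ℝ) ≤ 1 - X ω) h.1 (by ring)
    simp only [smul_eq_mul, mul_zero, zero_add, Real.exp_zero, mul_one] at hcx
    calc rexp (t * X ω) = rexp (X ω * t) := by rw [mul_comm]
      _ ≤ (1 - X ω) + X ω * rexp t := hcx
      _ = 1 - X ω + X ω * rexp t := by ring
  have hRint : Integrable (fun ω => 1 - X ω + X ω * rexp t) P :=
    ((integrable_const 1).sub hXint).add (hXint.mul_const _)
  have h1 : mgf X P t ≤ ∫ ω, (1 - X ω + X ω * rexp t) ∂P :=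
    integral_mono_ae hint hRint hpt
  have h2 : ∫ ω, (1 - X ω + X ω * rexp t) ∂P = 1 - μ + μ * rexp t := by
    have hsub : Integrable (fun ω => 1 - X ω) P := (integrable_const 1).sub hXint
    have hmulc : Integrable (fun ω => X ω * rexp t) P := hXint.mul_const _
    rw [integral_add hsub hmulc, integral_sub (integrable_const 1) hXint, integral_mul_const,
      hm, integral_const]
    simp
  rw [h2] at h1
  exact h1.trans (aux_hoeffding_core hμ0 hμ1 t)

theorem private_empirical_mean_concentration
    {Ω : Type*} [MeasurableSpace Ω] (P : Measure Ω) [IsProbabilityMeasure P]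
    (n : ℕ) (hn : 0 < n) (ρ : ℝ) (hρ : 0 < ρ) (μ : ℝ)
    (X : Fin n → Ω → ℝ) (Z : Ω → ℝ)
    (hXmeas : ∀ i, Measurable (X i)) (hZmeas : Measurable Z)
    (hindep : iIndepFun X P)
    (hident : ∀ i j, IdentDistrib (X i) (X j) P P)
    (hrange : ∀ i, ∀ᵐ ω ∂P, X i ω ∈ Set.Icc (0 : ℝ) 1)
    (hmean : ∀ i, ∫ ω, X i ω ∂P = μ)
    (hZlaw : P.map Z = gaussianReal 0 (Real.toNNReal (1 / (2 * ρ * (n : ℝ) ^ 2))))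
    (hZindep : IndepFun (fun ω (i : Fin n) => X i ω) Z P)
    (δ : ℝ) (hδ : δ ∈ Set.Ioc (0 : ℝ) 1) :
    P {ω | μ ≤ (∑ i, X i ω) / n + Z ω -
          Real.sqrt ((1 / (2 * n) + 1 / (ρ * (n : ℝ) ^ 2)) * Real.log (1 / δ))} ≤
        ENNReal.ofReal δ ∧
      P {ω | (∑ i, X i ω) / n + Z ω +
            Real.sqrt ((1 / (2 * n) + 1 / (ρ * (n : ℝ) ^ 2)) * Real.log (1 / δ)) ≤ μ} ≤
        ENNReal.ofReal δ := by
  obtain ⟨hδ0, hδ1⟩ := hδ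
  have hnR : (0 : ℝ) < n := Nat.cast_pos.2 hn
  have hnR' : (n : ℝ) ≠ 0 := hnR.ne'
  set v : ℝ≥0 := Real.toNNReal (1 / (2 * ρ * (n : ℝ) ^ 2)) with hvdef
  have hvval : (v : ℝ) = 1 / (2 * ρ * (n : ℝ) ^ 2) :=
    Real.coe_toNNReal _ (by positivity)
  have hvpos : (0 : ℝ) < (v : ℝ) := by rw [hvval]; positivity
  have hvne : v ≠ 0 := by
    intro h
    rw [h] at hvpos
    simp at hvpos
  -- μ bounds
  have i0 : Fin n := ⟨0, hn⟩
  have hXint : ∀ i, Integrable (X i) P := by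
    intro i
    refine Integrable.mono' (integrable_const 1) (hXmeas i).aestronglyMeasurable ?_
    filter_upwards [hrange i] with ω h
    rw [Real.norm_eq_abs, abs_of_nonneg h.1]; exact h.2
  have hμ0 : 0 ≤ μ := by
    rw [← hmean i0]
    refine integral_nonneg_of_ae ?_
    filter_upwards [hrange i0] with ω h using h.1
  have hμ1 : μ ≤ 1 := by
    rw [← hmean i0]
    have h := integral_mono_ae (hXint i0) (integrable_const 1)
      (by filter_upwards [hrange i0] with ω h using h.2)
    simpa using h
  -- the empirical mean A
  set A : Ω → ℝ := fun ω => (∑ i, X i ω) / n with hAdef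
  have hAmeas : Measurable A := by
    apply Measurable.div_const
    exact Finset.measurable_sum _ (fun i _ => hXmeas i)
  have hArange : ∀ᵐ ω ∂P, A ω ∈ Set.Icc (0 : ℝ) 1 := by
    have hall : ∀ᵐ ω ∂P, ∀ i, X i ω ∈ Set.Icc (0 : ℝ) 1 := (ae_all_iff).2 hrange
    filter_upwards [hall] with ω h
    constructor
    · apply div_nonneg (Finset.sum_nonneg fun i _ => (h i).1) hnR.le
    · rw [div_le_one hnR]
      calc (∑ i, X i ω) ≤ ∑ _i : Fin n, (1 : ℝ) :=
            Finset.sum_le_sum fun i _ => (h i).2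
        _ = n := by simp
  have hAZindep : IndepFun A Z P := by
    have hφ : Measurable (fun w : Fin n → ℝ => (∑ i, w i) / n) :=
      (Finset.measurable_sum _ (fun i _ => measurable_pi_apply i)).div_const _
    exact hZindep.comp hφ measurable_id
  -- integrability
  have hintA : ∀ t, Integrable (fun ω => rexp (t * A ω)) P := fun t =>
    aux_int_exp hAmeas hArange t
  have hintZ : ∀ t, Integrable (fun ω => rexp (t * Z ω)) P := by
    intro t
    have h := aux_gauss_integrable hvne t
    rw [← hZlaw] at h
    have := (integrable_map_measure
      (by exact (measurable_const_mul t).exp.aestronglyMeasurable)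
      hZmeas.aemeasurable).1 h
    exact this
  have hintY : ∀ t, Integrable (fun ω => rexp (t * (A + Z) ω)) P := fun t =>
    hAZindep.integrable_exp_mul_add (hintA t) (hintZ t)
  -- mgf bounds
  have hmgfA : ∀ t, mgf A P t ≤ rexp (μ * t + t ^ 2 / (8 * n)) := by
    intro t
    have heq : mgf A P t = mgf (∑ i, X i) P (t / n) := by
      simp only [mgf]
      refine integral_congr_ae (Filter.Eventually.of_forall fun ω => ?_)
      simp only [hAdef, Finset.sum_apply]
      congr 1
      field_simp
    rw [heq, hindep.mgf_sum hXmeas Finset.univ]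
    calc (∏ i, mgf (X i) P (t / n)) ≤ ∏ _i : Fin n, rexp (μ * (t / n) + (t / n) ^ 2 / 8) :=
          Finset.prod_le_prod (fun i _ => mgf_nonneg)
            (fun i _ => aux_mgf_le (hXmeas i) (hrange i) (hmean i) hμ0 hμ1 (t / n))
      _ = rexp (μ * (t / n) + (t / n) ^ 2 / 8) ^ n := by
          rw [Finset.prod_const, Finset.card_univ, Fintype.card_fin]
      _ = rexp ((n : ℝ) * (μ * (t / n) + (t / n) ^ 2 / 8)) := (Real.exp_nat_mul _ n).symm
      _ = rexp (μ * t + t ^ 2 / (8 * n)) := by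
          congr 1
          field_simp
  have hmgfZ : ∀ t, mgf Z P t = rexp ((v : ℝ) * t ^ 2 / 2) := by
    intro t
    rw [mgf, ← aux_gauss_mgf hvne t, ← hZlaw,
      integral_map hZmeas.aemeasurable
        (by exact (measurable_const_mul t).exp.aestronglyMeasurable)]
  set c : ℝ := 1 / (4 * n) + (v : ℝ) with hcdef
  have hc : 0 < c := by
    have : (0:ℝ) < 1 / (4 * n) := by positivity
    rw [hcdef]; linarith
  have hmgfY : ∀ t, mgf (A + Z) P t ≤ rexp (μ * t + c * t ^ 2 / 2) := by
    intro t
    rw [hAZindep.mgf_add (hintA t).aestronglyMeasurable (hintZ t).aestronglyMeasurable, hmgfZ t]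
    calc mgf A P t * rexp ((v : ℝ) * t ^ 2 / 2)
        ≤ rexp (μ * t + t ^ 2 / (8 * n)) * rexp ((v : ℝ) * t ^ 2 / 2) :=
          mul_le_mul_of_nonneg_right (hmgfA t) (Real.exp_nonneg _)
      _ = rexp (μ * t + t ^ 2 / (8 * n) + (v : ℝ) * t ^ 2 / 2) := (Real.exp_add _ _).symm
      _ = rexp (μ * t + c * t ^ 2 / 2) := by
          congr 1
          rw [hcdef]
          field_simp
          ring
  -- constants
  set L : ℝ := Real.log (1 / δ) with hLdef
  have hL0 : 0 ≤ L := Real.log_nonneg (one_le_one_div hδ0 hδ1)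
  have hLneg : -L = Real.log δ := by rw [hLdef, one_div, Real.log_inv, neg_neg]
  set a : ℝ := Real.sqrt ((1 / (2 * (n:ℝ)) + 1 / (ρ * (n : ℝ) ^ 2)) * L) with hadef
  have hK0 : (0:ℝ) ≤ 1 / (2 * (n:ℝ)) + 1 / (ρ * (n : ℝ) ^ 2) := by positivity
  have hKc : 1 / (2 * (n:ℝ)) + 1 / (ρ * (n : ℝ) ^ 2) = 2 * c := by
    rw [hcdef, hvval]
    field_simp
    ring
  have ha0 : 0 ≤ a := Real.sqrt_nonneg _
  have ha2c : a ^ 2 = 2 * c * L := by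
    rw [hadef, Real.sq_sqrt (mul_nonneg hK0 hL0), hKc]
  set t₀ : ℝ := a / c with ht₀def
  have ht₀ : 0 ≤ t₀ := div_nonneg ha0 hc.le
  have hct : c * t₀ = a := by rw [ht₀def]; field_simp
  have hta : t₀ * a = 2 * L := by
    have h : c * (t₀ * a) = c * (2 * L) := by
      calc c * (t₀ * a) = (c * t₀) * a := by ring
        _ = a * a := by rw [hct]
        _ = a ^ 2 := (sq a).symm
        _ = 2 * c * L := ha2c
        _ = c * (2 * L) := by ring
    exact mul_left_cancel₀ hc.ne' h
  have hexpδ : rexp (-L) = δ := by rw [hLneg, Real.exp_log hδ0]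
  constructor
  · -- upper tail
    have hset : {ω | μ ≤ (∑ i, X i ω) / n + Z ω - a} = {ω | μ + a ≤ (A + Z) ω} := by
      ext ω
      simp only [Set.mem_setOf_eq, Pi.add_apply, hAdef]
      constructor <;> intro h <;> linarith
    rw [hset]
    have h1 := measure_ge_le_exp_mul_mgf (X := A + Z) (μ := P) (μ + a) ht₀ (hintY t₀)
    have h2 : rexp (-t₀ * (μ + a)) * mgf (A + Z) P t₀ ≤ δ := by
      calc rexp (-t₀ * (μ + a)) * mgf (A + Z) P t₀
          ≤ rexp (-t₀ * (μ + a)) * rexp (μ * t₀ + c * t₀ ^ 2 / 2) :=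
            mul_le_mul_of_nonneg_left (hmgfY t₀) (Real.exp_nonneg _)
        _ = rexp (-t₀ * (μ + a) + (μ * t₀ + c * t₀ ^ 2 / 2)) := (Real.exp_add _ _).symm
        _ = rexp (-L) := by
            congr 1
            linear_combination (t₀ / 2) * hct - (1 / 2) * hta
        _ = δ := hexpδ
    rw [← ENNReal.ofReal_toReal (measure_ne_top P _)]
    exact ENNReal.ofReal_le_ofReal (h1.trans h2)
  · -- lower tail
    have hset : {ω | (∑ i, X i ω) / n + Z ω + a ≤ μ} = {ω | (A + Z) ω ≤ μ - a} := by
      ext ω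
      simp only [Set.mem_setOf_eq, Pi.add_apply, hAdef]
      constructor <;> intro h <;> linarith
    rw [hset]
    have h1 := measure_le_le_exp_mul_mgf (X := A + Z) (μ := P) (μ - a)
      (neg_nonpos.2 ht₀) (hintY (-t₀))
    have h2 : rexp (-(-t₀) * (μ - a)) * mgf (A + Z) P (-t₀) ≤ δ := by
      calc rexp (-(-t₀) * (μ - a)) * mgf (A + Z) P (-t₀)
          ≤ rexp (-(-t₀) * (μ - a)) * rexp (μ * (-t₀) + c * (-t₀) ^ 2 / 2) :=
            mul_le_mul_of_nonneg_left (hmgfY (-t₀)) (Real.exp_nonneg _)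
        _ = rexp (-(-t₀) * (μ - a) + (μ * (-t₀) + c * (-t₀) ^ 2 / 2)) := (Real.exp_add _ _).symm
        _ = rexp (-L) := by
            congr 1
            linear_combination (t₀ / 2) * hct - (1 / 2) * hta
        _ = δ := hexpδ
    rw [← ENNReal.ofReal_toReal (measure_ne_top P _)]
    exact ENNReal.ofReal_le_ofReal (h1.trans h2)
end
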